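/- In a finite DAG, if a vertex X minimizes the cardinality of the dependence set, i.e. |Φ(X)| ≤ |Φ(Y)| for all vertices Y, then X has exactly one source ancestor: there is a unique source S that is an ancestor of X. -/
import Mathlib


/-- Two vertices are dependent if they share a common ancestor
(ancestorship via the reflexive-transitive closure of the edge relation). -/
def Dep {V : Type*} (E : V → V → Prop) (x y : V) : Prop :=
  ∃ a, Relation.ReflTransGen E a x ∧ Relation.ReflTransGen E a y

/-- The dependence set of a vertex: all vertices dependent on it. -/
def Phi {V : Type*} (E : V → V → Prop) (x : V) : Set V := {y | Dep E x y}

/-- A source has no proper ancestors. -/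
lemma source_eq {V : Type*} {E : V → V → Prop} {S a : V} (hS : ∀ A, ¬ E A S)
    (h : Relation.ReflTransGen E a S) : a = S := by
  rcases h.cases_tail with h | ⟨b, _, hb⟩
  · exact h.symm
  · exact absurd hb (hS b)

/-- In a finite DAG, a vertex minimizing the cardinality of its dependence set
has exactly one source ancestor. -/
theorem min_dep_set_unique_source_ancestor {V : Type*} [Fintype V] (E : V → V → Prop)
    (hdag : Irreflexive (Relation.TransGen E))
    (X : V) (hmin : ∀ Y : V, (Phi E X).ncard ≤ (Phi E Y).ncard) :
    ∃! S : V, (∀ A, ¬ E A S) ∧ Relation.ReflTransGen E S X := by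
  -- existence: minimal element of the ancestor set under TransGen E
  have hwf : WellFounded (Relation.TransGen E) := by
    have : IsIrrefl V (Relation.TransGen E) := ⟨hdag⟩
    exact Finite.wellFounded_of_trans_of_irrefl _
  obtain ⟨S, hSX, hSmin⟩ := hwf.has_min {a | Relation.ReflTransGen E a X}
    ⟨X, Relation.ReflTransGen.refl⟩
  have hsource : ∀ A, ¬ E A S := fun A hA =>
    hSmin A ((Relation.ReflTransGen.single hA).trans hSX) (Relation.TransGen.single hA)
  refine ⟨S, ⟨hsource, hSX⟩, ?_⟩
  rintro T ⟨hTsrc, hTX⟩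
  by_contra hne
  -- Φ(T) ⊊ Φ(X): S ∈ Φ(X) \ Φ(T)
  have hsub : Phi E T ⊆ Phi E X := by
    rintro y ⟨a, haT, hay⟩
    have := source_eq hTsrc haT
    subst this
    exact ⟨a, hTX, hay⟩
  have hSin : S ∈ Phi E X := ⟨S, hSX, Relation.ReflTransGen.refl⟩
  have hSnot : S ∉ Phi E T := by
    rintro ⟨a, haT, haS⟩
    have := source_eq hTsrc haT
    subst this
    have := source_eq hsource haS
    exact hne this
  have hlt : (Phi E T).ncard < (Phi E X).ncard :=
    Set.ncard_lt_ncard (Set.ssubset_iff_of_subset hsub |>.mpr ⟨S, hSin, hSnot⟩)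
      (Set.toFinite _)
  exact absurd (hmin T) (not_le.mpr hlt)
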